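/- Let n be a positive integer, f : ℝⁿ → ℝⁿ, and ε₁ > 0. Suppose B : ℝⁿ → ℝ is continuously differentiable and ⟨∇B(x), f(x)⟩ ≤ 0 for all x ∈ ℝⁿ with |B(x)| ≤ √ε₁. Then the sublevel set {x ∈ ℝⁿ : B(x) ≤ 0} is forward invariant along trajectories: if x : ℝ → ℝⁿ is differentiable with x′(t) = f(x(t)) for all t ≥ 0 and B(x(0)) ≤ 0, then B(x(t)) ≤ 0 for all t ≥ 0. -/

import Mathlib

/-- The sublevel set `{x : B x ≤ 0}` is forward invariant along trajectories of `ẋ = f x`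
whenever the Lie derivative of `B` along `f` is nonpositive wherever `|B x| ≤ √ε₁`. -/
theorem barrier_sublevel_forward_invariant
    (n : ℕ) (hn : 0 < n)
    (f : EuclideanSpace ℝ (Fin n) → EuclideanSpace ℝ (Fin n))
    (ε₁ : ℝ) (hε₁ : 0 < ε₁)
    (B : EuclideanSpace ℝ (Fin n) → ℝ)
    (hB : ContDiff ℝ 1 B)
    (hBlie : ∀ x : EuclideanSpace ℝ (Fin n),
      |B x| ≤ Real.sqrt ε₁ → fderiv ℝ B x (f x) ≤ 0)
    (x : ℝ → EuclideanSpace ℝ (Fin n))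
    (hx : Differentiable ℝ x)
    (hode : ∀ t : ℝ, 0 ≤ t → deriv x t = f (x t))
    (hinit : B (x 0) ≤ 0) :
    ∀ t : ℝ, 0 ≤ t → B (x t) ≤ 0 := by
  intro T hT
  by_contra hpos
  push_neg at hpos
  set g : ℝ → ℝ := fun t => B (x t) with hg
  have hgc : Continuous g := hB.continuous.comp hx.continuous
  have hderiv : ∀ s : ℝ, HasDerivAt g (fderiv ℝ B (x s) (deriv x s)) s := fun s =>
    (hB.differentiable one_ne_zero (x s)).hasFDerivAt.comp_hasDerivAt s (hx s).hasDerivAt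
  set m := min (g T) (Real.sqrt ε₁) with hm
  have hm0 : 0 < m := lt_min hpos (Real.sqrt_pos.mpr hε₁)
  have hmε : m ≤ Real.sqrt ε₁ := min_le_right _ _
  -- last time in [0,T] with g ≤ 0
  set S₁ : Set ℝ := {s | s ∈ Set.Icc 0 T ∧ g s ≤ 0} with hS₁
  have hS₁ne : S₁.Nonempty := ⟨0, ⟨le_rfl, hT⟩, hinit⟩
  have hS₁bdd : BddAbove S₁ := ⟨T, fun s hs => hs.1.2⟩
  have hS₁closed : IsClosed S₁ := by
    have h : S₁ = Set.Icc 0 T ∩ g ⁻¹' Set.Iic 0 := by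
      ext s; simp [hS₁, Set.mem_Icc]
    rw [h]; exact isClosed_Icc.inter (isClosed_Iic.preimage hgc)
  set t₁ := sSup S₁ with ht₁
  have ht₁mem : t₁ ∈ S₁ := hS₁closed.csSup_mem hS₁ne hS₁bdd
  have ht₁0 : 0 ≤ t₁ := ht₁mem.1.1
  have ht₁T : t₁ ≤ T := ht₁mem.1.2
  have hgt₁ : g t₁ ≤ 0 := ht₁mem.2
  have hposafter : ∀ s, t₁ < s → s ≤ T → 0 < g s := by
    intro s hs hsT
    by_contra h
    push_neg at h
    exact absurd (le_csSup hS₁bdd ⟨⟨le_trans ht₁0 hs.le, hsT⟩, h⟩) (not_le.mpr hs)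
  -- first time in [t₁,T] with g ≥ m
  set S₂ : Set ℝ := {s | s ∈ Set.Icc t₁ T ∧ m ≤ g s} with hS₂
  have hS₂ne : S₂.Nonempty := ⟨T, ⟨ht₁T, le_rfl⟩, min_le_left _ _⟩
  have hS₂bdd : BddBelow S₂ := ⟨t₁, fun s hs => hs.1.1⟩
  have hS₂closed : IsClosed S₂ := by
    have h : S₂ = Set.Icc t₁ T ∩ g ⁻¹' Set.Ici m := by
      ext s; simp [hS₂, Set.mem_Icc]
    rw [h]; exact isClosed_Icc.inter (isClosed_Ici.preimage hgc)
  set t₂ := sInf S₂ with ht₂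
  have ht₂mem : t₂ ∈ S₂ := hS₂closed.csInf_mem hS₂ne hS₂bdd
  have ht₂1 : t₁ ≤ t₂ := ht₂mem.1.1
  have ht₂T : t₂ ≤ T := ht₂mem.1.2
  have hgt₂ : m ≤ g t₂ := ht₂mem.2
  have hbefore : ∀ s, t₁ ≤ s → s < t₂ → g s < m := by
    intro s hs hst
    by_contra h
    push_neg at h
    exact absurd (csInf_le hS₂bdd ⟨⟨hs, le_trans hst.le ht₂T⟩, h⟩) (not_le.mpr hst)
  -- g is antitone on [t₁, t₂]
  have hanti : AntitoneOn g (Set.Icc t₁ t₂) := by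
    apply antitoneOn_of_deriv_nonpos (convex_Icc t₁ t₂) hgc.continuousOn
    · intro s _
      exact (hderiv s).differentiableAt.differentiableWithinAt
    · intro s hs
      rw [interior_Icc] at hs
      have hs0 : 0 ≤ s := le_trans ht₁0 hs.1.le
      have hgs : 0 < g s := hposafter s hs.1 (le_trans hs.2.le ht₂T)
      have hgsm : g s < m := hbefore s hs.1.le hs.2
      have habs : |B (x s)| ≤ Real.sqrt ε₁ := by
        rw [abs_of_pos hgs]
        exact le_trans hgsm.le hmε
      rw [(hderiv s).deriv, hode s hs0]
      exact hBlie (x s) habs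
  have := hanti (Set.left_mem_Icc.mpr ht₂1) (Set.right_mem_Icc.mpr ht₂1) ht₂1
  linarith
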